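/- Let A be an admissible set of integers, i.e. A is finite, nonempty, and either A ⊆ 2ℤ or A ⊆ 2ℤ+1. Let [A] := (A−1) ∪ (A+1). Then 3^{|A|} · η(A) = η⁺([A]). -/

import Mathlib

/-- η of a finite set of integers c₁ < c₂ < … < c_ℓ : the product
∏_{i=1}^{ℓ−1} (c_{i+1} − c_i − 1), equal to 1 when ℓ ≤ 1. -/
def eta (F : Finset ℤ) : ℤ :=
  (((F.sort (· ≤ ·)).zip (F.sort (· ≤ ·)).tail).map (fun p => p.2 - p.1 - 1)).prod

/-- η⁺ of a finite set of integers c₁ < c₂ < … < c_ℓ : the product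
∏_{i=1}^{ℓ−1} (c_{i+1} − c_i + 1), equal to 1 when ℓ ≤ 1. -/
def etaPlus (F : Finset ℤ) : ℤ :=
  (((F.sort (· ≤ ·)).zip (F.sort (· ≤ ·)).tail).map (fun p => p.2 - p.1 + 1)).prod

/-- A set of integers is admissible if it is finite, nonempty, and consists only of
even integers or only of odd integers. -/
def Admissible (A : Finset ℤ) : Prop :=
  A.Nonempty ∧ ((∀ a ∈ A, Even a) ∨ (∀ a ∈ A, Odd a))


lemma gap_prod_append (f : ℤ × ℤ → ℤ) :
    ∀ (l : List ℤ) (x a : ℤ),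
      (((l ++ [x, a]).zip (l ++ [x, a]).tail).map f).prod
        = (((l ++ [x]).zip (l ++ [x]).tail).map f).prod * f (x, a)
  | [], x, a => by simp
  | [y], x, a => by simp
  | y :: z :: l, x, a => by
    have ih := gap_prod_append f (z :: l) x a
    simp only [List.cons_append, List.zip_cons_cons, List.tail_cons, List.map_cons,
      List.prod_cons] at ih ⊢
    rw [ih, mul_assoc]

lemma sort_insert_max {a : ℤ} {s : Finset ℤ} (h : ∀ b ∈ s, b < a) :
    (insert a s).sort (· ≤ ·) = s.sort (· ≤ ·) ++ [a] := by
  have hnd : (s.sort (· ≤ ·) ++ [a]).Nodup := by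
    refine List.Nodup.append (s.sort_nodup _) (List.nodup_singleton a) ?_
    intro x hx hy
    simp only [List.mem_singleton] at hy; subst hy
    exact (h x (by simpa using hx)).ne rfl
  have hsorted : (s.sort (· ≤ ·) ++ [a]).Pairwise (· ≤ ·) := by
    rw [List.pairwise_append]
    refine ⟨s.pairwise_sort _, List.pairwise_singleton _ a, ?_⟩
    intro x hx y hy
    simp only [List.mem_singleton] at hy; subst hy
    exact (h x (by simpa using hx)).le
  have ht : (s.sort (· ≤ ·) ++ [a]).toFinset = insert a s := by
    ext x
    simp [Finset.mem_sort, or_comm]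
  rw [← ht, (List.toFinset_sort _ hnd).mpr hsorted]

lemma gap_prod_insert_max (f : ℤ × ℤ → ℤ) {a : ℤ} {s : Finset ℤ} (hs : s.Nonempty)
    (h : ∀ b ∈ s, b < a) :
    ((((insert a s).sort (· ≤ ·)).zip ((insert a s).sort (· ≤ ·)).tail).map f).prod
      = (((s.sort (· ≤ ·)).zip (s.sort (· ≤ ·)).tail).map f).prod * f (s.max' hs, a) := by
  have hmem : s.max' hs ∈ s.sort (· ≤ ·) := (Finset.mem_sort _).mpr (s.max'_mem hs)
  have hl : s.sort (· ≤ ·) ≠ [] := List.ne_nil_of_mem hmem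
  have hlast : (s.sort (· ≤ ·)).getLast hl = s.max' hs := by
    rw [List.getLast_eq_getElem]
    exact Finset.sorted_last_eq_max'
  rw [sort_insert_max h]
  conv_lhs => rw [← List.dropLast_append_getLast hl]
  rw [List.append_assoc, List.singleton_append, gap_prod_append,
    ← List.singleton_append, ← List.append_assoc, List.dropLast_append_getLast hl, hlast]
  simp

lemma eta_insert_max {a : ℤ} {s : Finset ℤ} (hs : s.Nonempty) (h : ∀ b ∈ s, b < a) :
    eta (insert a s) = eta s * (a - s.max' hs - 1) :=
  gap_prod_insert_max _ hs h

lemma etaPlus_insert_max {a : ℤ} {s : Finset ℤ} (hs : s.Nonempty) (h : ∀ b ∈ s, b < a) :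
    etaPlus (insert a s) = etaPlus s * (a - s.max' hs + 1) :=
  gap_prod_insert_max _ hs h

/-- For any admissible set A, with [A] = (A−1) ∪ (A+1), one has
3^{|A|} · η(A) = η⁺([A]). -/
theorem three_pow_eta_eq_etaPlus (A : Finset ℤ) (hA : Admissible A) :
    (3 : ℤ) ^ A.card * eta A = etaPlus (A.image (· - 1) ∪ A.image (· + 1)) := by
  induction A using Finset.induction_on_max with
  | empty => exact absurd hA.1 (by simp)
  | insert a s hlt ih =>
    have hanotin : a ∉ s := fun hm => lt_irrefl a (hlt a hm)
    rcases s.eq_empty_or_nonempty with rfl | hs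
    · -- A = {a}
      simp only [insert_empty_eq]
      have h1 : ({a} : Finset ℤ).image (· - 1) = {a - 1} := rfl
      have h2 : ({a} : Finset ℤ).image (· + 1) = {a + 1} := rfl
      rw [h1, h2]
      have : ({a - 1} : Finset ℤ) ∪ {a + 1} = insert (a + 1) {a - 1} := by
        ext x; simp [or_comm]
      rw [this, etaPlus_insert_max (by simp) (by intro b hb; simp at hb; omega)]
      simp [eta, etaPlus]
    · -- inductive step
      set M := s.max' hs with hM
      have hMmem : M ∈ s := s.max'_mem hs
      have hadm : Admissible s := ⟨hs, by
        rcases hA.2 with h | h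
        · exact Or.inl fun x hx => h x (Finset.mem_insert_of_mem hx)
        · exact Or.inr fun x hx => h x (Finset.mem_insert_of_mem hx)⟩
      have hIH := ih hadm
      -- parity: a - M is even and positive
      have hev : Even (a - M) := by
        rcases hA.2 with h | h
        · exact (h a (Finset.mem_insert_self a s)).sub (h M (Finset.mem_insert_of_mem hMmem))
        · exact (h a (Finset.mem_insert_self a s)).sub_odd (h M (Finset.mem_insert_of_mem hMmem))
      have hlt' : M < a := hlt M hMmem
      obtain ⟨k, hk⟩ := hev
      have hge : a - M ≥ 2 := by omega
      -- the union set
      set T := s.image (· - 1) ∪ s.image (· + 1) with hT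
      have hMT : M + 1 ∈ T := Finset.mem_union.mpr (Or.inr (Finset.mem_image.mpr ⟨M, hMmem, rfl⟩))
      have hTne : T.Nonempty := ⟨M + 1, hMT⟩
      have hTle : ∀ x ∈ T, x ≤ M + 1 := by
        intro x hx
        simp only [hT, Finset.mem_union, Finset.mem_image] at hx
        rcases hx with ⟨b, hb, rfl⟩ | ⟨b, hb, rfl⟩
        · have := s.le_max' b hb; omega
        · have := s.le_max' b hb; omega
      have hTmax : T.max' hTne = M + 1 := by
        apply le_antisymm (T.max'_le _ _ hTle)
        exact T.le_max' _ hMT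
      have hset : (insert a s).image (· - 1) ∪ (insert a s).image (· + 1)
          = insert (a - 1) (insert (a + 1) T) := by
        simp only [Finset.image_insert, hT, Finset.insert_union, Finset.union_insert]
        exact Finset.insert_comm _ _ _
      have hcard : (insert a s).card = s.card + 1 := Finset.card_insert_of_notMem hanotin
      rw [hset, hcard, eta_insert_max hs hlt, ← hM]
      by_cases h2 : a - M = 2
      · -- a - 1 = M + 1 ∈ T
        have hmem' : a - 1 ∈ insert (a + 1) T := by
          apply Finset.mem_insert_of_mem
          have : a - 1 = M + 1 := by omega
          rw [this]; exact hMT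
        rw [Finset.insert_eq_self.mpr hmem']
        rw [etaPlus_insert_max hTne (fun b hb => lt_of_le_of_lt (hTle b hb) (by omega))]
        rw [hTmax, ← hIH]
        rw [pow_succ]
        linear_combination (2 * eta s * 3 ^ s.card) * h2
      · -- a - 1 > M + 1
        have hgt : M + 1 < a - 1 := by omega
        rw [Finset.insert_comm]
        have hT'ne : (insert (a-1) T).Nonempty := Finset.insert_nonempty _ _
        have hT'lt : ∀ b ∈ insert (a-1) T, b < a + 1 := by
          intro b hb
          rcases Finset.mem_insert.mp hb with rfl | hb
          · omega
          · exact lt_of_le_of_lt (hTle b hb) (by omega)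
        rw [etaPlus_insert_max hT'ne hT'lt]
        have hT'max : (insert (a-1) T).max' hT'ne = a - 1 := by
          apply le_antisymm
          · apply Finset.max'_le
            intro b hb
            rcases Finset.mem_insert.mp hb with rfl | hb
            · exact le_refl _
            · exact le_trans (hTle b hb) (by omega)
          · exact Finset.le_max' _ _ (Finset.mem_insert_self _ _)
        rw [hT'max, etaPlus_insert_max hTne (fun b hb => lt_of_le_of_lt (hTle b hb) (by omega)),
          hTmax, ← hIH, pow_succ]
        ring
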